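/- Let V be a finite-dimensional real inner product space, and let P₁ and P₂ be nonempty compact convex subsets of V contained in an affine hyperplane L with 0 ∉ L. Let P be the convex join of P₁ and P₂, i.e., the union of all segments [x,y] with x ∈ P₁ and y ∈ P₂. Let μ₁, μ₂ be linear functionals on V such that μ₂ vanishes identically on P₁ and μ₂(y) > 0 for all y ∈ P₂. Then for every ε > 0 there exists η_ε > 0 such that for all real η > η_ε and all λ ∈ P: if μ₁(λ)/‖λ‖ + η·μ₂(λ)/‖λ‖ < 0, then the distance from λ to P₁ is less than ε. -/
import Mathlib


/-- Let `P₁, P₂` be nonempty compact convex subsets of a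
finite-dimensional real inner product space, contained in an affine hyperplane
`L = {x | g x = 1}` not containing `0`, and let `P` be their convex join. Let `μ₁, μ₂` be
linear functionals with `μ₂ ≡ 0` on `P₁` and `μ₂ > 0` on `P₂`. Then for every `ε > 0`
there is `η_ε > 0` such that for all `η > η_ε` and all `λ ∈ P`, if
`μ₁(λ)/‖λ‖ + η·μ₂(λ)/‖λ‖ < 0` then `dist(λ, P₁) < ε`. -/
theorem negativity_forces_proximity_to_face
    (V : Type*) [NormedAddCommGroup V] [InnerProductSpace ℝ V] [FiniteDimensional ℝ V]
    (P₁ P₂ : Set V) (hP₁ : P₁.Nonempty) (hP₂ : P₂.Nonempty)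
    (hcP₁ : IsCompact P₁) (hcP₂ : IsCompact P₂)
    (hconvP₁ : Convex ℝ P₁) (hconvP₂ : Convex ℝ P₂)
    (g : V →ₗ[ℝ] ℝ) (hgP₁ : ∀ x ∈ P₁, g x = 1) (hgP₂ : ∀ y ∈ P₂, g y = 1)
    (μ₁ μ₂ : V →ₗ[ℝ] ℝ)
    (hμ₂P₁ : ∀ x ∈ P₁, μ₂ x = 0) (hμ₂P₂ : ∀ y ∈ P₂, 0 < μ₂ y) :
    ∀ ε : ℝ, 0 < ε → ∃ ηε : ℝ, 0 < ηε ∧ ∀ η : ℝ, ηε < η →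
      ∀ l ∈ convexJoin ℝ P₁ P₂,
        μ₁ l / ‖l‖ + η * (μ₂ l / ‖l‖) < 0 → Metric.infDist l P₁ < ε := by
  intro ε hε
  -- bound on norms
  obtain ⟨R₀, hR₀⟩ := (hcP₁.union hcP₂).isBounded.exists_norm_le
  set R : ℝ := max R₀ 1 with hRdef
  have hR1 : (1:ℝ) ≤ R := le_max_right _ _
  have hRpos : (0:ℝ) < R := lt_of_lt_of_le one_pos hR1
  have hR : ∀ z ∈ P₁ ∪ P₂, ‖z‖ ≤ R := fun z hz => le_trans (hR₀ z hz) (le_max_left _ _)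
  -- min of μ₂ on P₂
  have hcont : Continuous μ₂ := LinearMap.continuous_of_finiteDimensional μ₂
  obtain ⟨y₀, hy₀, hy₀min⟩ := hcP₂.exists_isMinOn hP₂ hcont.continuousOn
  set c : ℝ := μ₂ y₀ with hcdef
  have hc : 0 < c := hμ₂P₂ y₀ hy₀
  -- bound on μ₁
  set f : V →L[ℝ] ℝ := LinearMap.toContinuousLinearMap μ₁ with hfdef
  set C : ℝ := ‖f‖ * R + 1 with hCdef
  have hC : 0 < C := by positivity
  refine ⟨C * (2 * R) / (c * ε), by positivity, ?_⟩
  intro η hη l hl hneg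
  have hηpos : 0 < η := lt_trans (by positivity) hη
  rw [mem_convexJoin] at hl
  obtain ⟨x, hx, y, hy, hseg⟩ := hl
  obtain ⟨a, b, ha, hb, hab, rfl⟩ := hseg
  rcases eq_or_lt_of_le hb with hb0 | hbpos
  · have : a = 1 := by linarith
    have : a • x + b • y = x := by rw [this, ← hb0]; simp
    rw [this]
    rw [Metric.infDist_zero_of_mem hx]; exact hε
  set l := a • x + b • y with hldef
  have hgl : g l = 1 := by
    simp [hldef, map_add, map_smul, hgP₁ x hx, hgP₂ y hy, hab]
  have hlne : l ≠ 0 := fun h => by simp [h] at hgl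
  have hlpos : 0 < ‖l‖ := norm_pos_iff.mpr hlne
  have hlR : ‖l‖ ≤ R := by
    calc ‖l‖ ≤ a * ‖x‖ + b * ‖y‖ := by
          rw [hldef]
          refine le_trans (norm_add_le _ _) ?_
          rw [norm_smul, norm_smul, Real.norm_of_nonneg ha, Real.norm_of_nonneg hb]
      _ ≤ a * R + b * R := by
          have h1 := hR x (Or.inl hx); have h2 := hR y (Or.inr hy)
          nlinarith
      _ = R := by rw [← add_mul, hab, one_mul]
  -- main inequality without division
  have key : μ₁ l + η * μ₂ l < 0 := by
    have h1 : (μ₁ l + η * μ₂ l) / ‖l‖ < 0 := by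
      rw [add_div, mul_div_assoc]; exact hneg
    by_contra h
    push_neg at h
    exact absurd (div_nonneg h hlpos.le) (not_le.mpr h1)
  have hμ₂l : μ₂ l = b * μ₂ y := by
    simp [hldef, map_add, map_smul, hμ₂P₁ x hx]
  have hcy : c ≤ μ₂ y := hy₀min hy
  have hμ1bd : -μ₁ l ≤ ‖f‖ * R := by
    have : |μ₁ l| ≤ ‖f‖ * ‖l‖ := by
      have h0 : ‖f l‖ ≤ ‖f‖ * ‖l‖ := f.le_opNorm l
      rw [Real.norm_eq_abs] at h0
      exact h0
    have h2 : ‖f‖ * ‖l‖ ≤ ‖f‖ * R := mul_le_mul_of_nonneg_left hlR (norm_nonneg f)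
    have := neg_abs_le (μ₁ l)
    linarith [abs_nonneg (μ₁ l)]
  have hkey2 : η * (b * c) < C := by
    have : η * μ₂ l < -μ₁ l := by linarith
    have h2 : η * (b * c) ≤ η * μ₂ l := by
      rw [hμ₂l]
      have : b * c ≤ b * μ₂ y := by gcongr
      exact mul_le_mul_of_nonneg_left this hηpos.le
    have : η * (b * c) < ‖f‖ * R := lt_of_le_of_lt h2 (lt_of_lt_of_le ‹η * μ₂ l < -μ₁ l› hμ1bd)
    linarith
  -- distance bound
  have hdist : Metric.infDist l P₁ ≤ b * (2 * R) := by
    have h1 : Metric.infDist l P₁ ≤ dist l x := Metric.infDist_le_dist_of_mem hx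
    have h2 : dist l x = b * ‖y - x‖ := by
      rw [dist_eq_norm]
      have : l - x = b • (y - x) := by
        rw [hldef]
        have : a = 1 - b := by linarith
        rw [this]; module
      rw [this, norm_smul, Real.norm_of_nonneg hb]
    have h3 : ‖y - x‖ ≤ 2 * R := by
      calc ‖y - x‖ ≤ ‖y‖ + ‖x‖ := norm_sub_le _ _
        _ ≤ R + R := add_le_add (hR y (Or.inr hy)) (hR x (Or.inl hx))
        _ = 2 * R := by ring
    calc Metric.infDist l P₁ ≤ dist l x := h1
      _ = b * ‖y - x‖ := h2
      _ ≤ b * (2 * R) := by gcongr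
  -- combine
  have hfin : b * (2 * R) < ε := by
    have hηε : C * (2 * R) / (c * ε) * (c * ε) = C * (2 * R) := by
      field_simp
    have h1 : η * (b * c) * (2 * R) < C * (2 * R) :=
      mul_lt_mul_of_pos_right hkey2 (by positivity)
    have h3 : C * (2 * R) / (c * ε) * (c * ε) < η * (c * ε) :=
      mul_lt_mul_of_pos_right hη (mul_pos hc hε)
    have h4 : (η * c) * (b * (2 * R)) < (η * c) * ε := by
      calc (η * c) * (b * (2 * R)) = η * (b * c) * (2 * R) := by ring
        _ < C * (2 * R) := h1
        _ = C * (2 * R) / (c * ε) * (c * ε) := hηε.symm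
        _ < η * (c * ε) := h3
        _ = (η * c) * ε := by ring
    exact lt_of_mul_lt_mul_left h4 (by positivity)
  linarith
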